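/- Every nonempty packed word w admits a unique factorization w = w_1/w_2/⋯/w_k as an iterated left-shifted concatenation in which every factor w_i is an irreducible packed word. -/

import Mathlib

/-- The maximum letter of a word (a list of natural numbers), with `wmax [] = 0`. -/
def wmax (w : List ℕ) : ℕ := w.foldr max 0

/-- A word over the positive integers is packed if every letter from `1` to its maximum
occurs in it. -/
def IsPacked (w : List ℕ) : Prop :=
  (∀ x ∈ w, 0 < x) ∧ ∀ i : ℕ, 0 < i → i ≤ wmax w → i ∈ w

/-- Shift every letter of `w` by `m`. -/
def shiftW (m : ℕ) (w : List ℕ) : List ℕ := w.map (· + m)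

/-- Left-shifted concatenation `u / v`: the letters of `u` are shifted by `max v`. -/
def slash (u v : List ℕ) : List ℕ := shiftW (wmax v) u ++ v

/-- Iterated left-shifted concatenation `w₁ / w₂ / ⋯ / w_k`. -/
def slashAll (l : List (List ℕ)) : List ℕ := l.foldr slash []

/-- `c` is a global descent of `w` (positions are 1-based, `1 ≤ c ≤ |w| - 1`). -/
def GlobalDescent (w : List ℕ) (c : ℕ) : Prop :=
  1 ≤ c ∧ c + 1 ≤ w.length ∧ ∀ a ∈ w.take c, ∀ b ∈ w.drop c, b < a

/-- A packed word is irreducible if it is nonempty and has no global descent. -/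
def Irred (w : List ℕ) : Prop :=
  IsPacked w ∧ w ≠ [] ∧ ∀ c, ¬ GlobalDescent w c

lemma wmax_cons (a : ℕ) (t : List ℕ) : wmax (a :: t) = max a (wmax t) := rfl

lemma le_wmax {w : List ℕ} {x : ℕ} (hx : x ∈ w) : x ≤ wmax w := by
  induction w with
  | nil => simp at hx
  | cons a t ih =>
    rw [wmax_cons]
    rcases List.mem_cons.1 hx with h | h
    · omega
    · have := ih h; omega

lemma wmax_mem {w : List ℕ} (h : wmax w ≠ 0) : wmax w ∈ w := by
  induction w with
  | nil => simp [wmax] at h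
  | cons a t ih =>
    rw [wmax_cons] at h ⊢
    rcases le_total a (wmax t) with hle | hle
    · rw [max_eq_right hle] at h ⊢
      exact List.mem_cons_of_mem _ (ih h)
    · rw [max_eq_left hle]; exact List.mem_cons_self

lemma wmax_pos {w : List ℕ} (hne : w ≠ []) (hpos : ∀ x ∈ w, 0 < x) : 0 < wmax w := by
  obtain ⟨a, t, rfl⟩ := List.exists_cons_of_ne_nil hne
  have := hpos a (List.mem_cons_self)
  have := le_wmax (show a ∈ a :: t from List.mem_cons_self)
  omega

lemma wmax_append (u v : List ℕ) : wmax (u ++ v) = max (wmax u) (wmax v) := by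
  induction u with
  | nil => simp [wmax]
  | cons a t ih => rw [List.cons_append, wmax_cons, wmax_cons, ih, max_assoc]

lemma wmax_shift (m : ℕ) {u : List ℕ} (h : u ≠ []) : wmax (shiftW m u) = wmax u + m := by
  induction u with
  | nil => simp at h
  | cons a t ih =>
    by_cases ht : t = []
    · subst ht; simp [shiftW, wmax]
    · have : shiftW m (a :: t) = (a + m) :: shiftW m t := rfl
      rw [this, wmax_cons, wmax_cons, ih ht]
      omega

lemma wmax_map_sub (m : ℕ) {u : List ℕ} (h : ∀ x ∈ u, m ≤ x) :
    wmax (u.map (· - m)) = wmax u - m := by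
  induction u with
  | nil => simp [wmax]
  | cons a t ih =>
    have ha := h a (List.mem_cons_self)
    rw [List.map_cons, wmax_cons, wmax_cons, ih (fun x hx => h x (List.mem_cons_of_mem _ hx))]
    omega

lemma mem_shiftW {m x : ℕ} {u : List ℕ} : x ∈ shiftW m u ↔ ∃ y ∈ u, y + m = x := by
  simp [shiftW]

lemma shiftW_length (m : ℕ) (u : List ℕ) : (shiftW m u).length = u.length := by
  simp [shiftW]

lemma slash_nil (u : List ℕ) : slash u [] = u := by
  simp [slash, shiftW, wmax]

lemma slash_ne_nil {u v : List ℕ} (hv : v ≠ []) : slash u v ≠ [] := by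
  simp [slash, hv]

lemma slash_packed {u v : List ℕ} (hu : IsPacked u) (hv : IsPacked v) :
    IsPacked (slash u v) := by
  by_cases hune : u = []
  · subst hune; simpa [slash, shiftW] using hv
  constructor
  · intro x hx
    rcases List.mem_append.1 hx with h | h
    · obtain ⟨y, hy, rfl⟩ := mem_shiftW.1 h
      have := hu.1 y hy; omega
    · exact hv.1 x h
  · intro i hi hile
    have hmax : wmax (slash u v) = wmax u + wmax v := by
      rw [slash, wmax_append, wmax_shift _ hune]
      omega
    rw [hmax] at hile
    by_cases hiv : i ≤ wmax v
    · exact List.mem_append.2 (Or.inr (hv.2 i hi hiv))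
    · refine List.mem_append.2 (Or.inl (mem_shiftW.2 ⟨i - wmax v, ?_, by omega⟩))
      exact hu.2 _ (by omega) (by omega)

lemma slash_take {u v : List ℕ} {d : ℕ} (hd : d ≤ u.length) :
    (slash u v).take d = shiftW (wmax v) (u.take d) := by
  rw [slash, List.take_append_of_le_length (by simp [shiftW_length]; omega), shiftW, shiftW,
    List.map_take]

lemma slash_drop {u v : List ℕ} {d : ℕ} (hd : d ≤ u.length) :
    (slash u v).drop d = shiftW (wmax v) (u.drop d) ++ v := by
  rw [slash, List.drop_append_of_le_length (by simp [shiftW_length]; omega), shiftW, shiftW,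
    List.map_drop]

lemma slash_length (u v : List ℕ) : (slash u v).length = u.length + v.length := by
  simp [slash, shiftW]

lemma slash_GD {u v : List ℕ} (hu : IsPacked u) (hune : u ≠ []) (hvne : v ≠ []) :
    GlobalDescent (slash u v) u.length := by
  refine ⟨by cases u <;> simp_all, ?_, ?_⟩
  · rw [slash_length]
    have : 0 < v.length := List.length_pos_iff.2 hvne
    omega
  · intro a ha b hb
    rw [slash_take le_rfl] at ha
    rw [slash_drop le_rfl] at hb
    simp only [List.drop_length, shiftW, List.map_nil, List.nil_append] at hb
    obtain ⟨y, hy, rfl⟩ := mem_shiftW.1 (by simpa [List.take_length] using ha)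
    have h1 := hu.1 y hy
    have h2 := le_wmax hb
    omega

lemma GD_of_slash {u v : List ℕ} {d : ℕ} (hd : d < u.length)
    (h : GlobalDescent (slash u v) d) : GlobalDescent u d := by
  obtain ⟨h1, _, h3⟩ := h
  refine ⟨h1, by omega, ?_⟩
  intro a ha b hb
  have ha' : a + wmax v ∈ (slash u v).take d := by
    rw [slash_take (by omega)]
    exact mem_shiftW.2 ⟨a, ha, rfl⟩
  have hb' : b + wmax v ∈ (slash u v).drop d := by
    rw [slash_drop (by omega)]
    exact List.mem_append.2 (Or.inl (mem_shiftW.2 ⟨b, hb, rfl⟩))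
  have := h3 _ ha' _ hb'
  omega

lemma slash_GD_of_GD {u v : List ℕ} {d : ℕ} (hu : IsPacked u)
    (h : GlobalDescent u d) : GlobalDescent (slash u v) d := by
  obtain ⟨h1, h2, h3⟩ := h
  refine ⟨h1, by rw [slash_length]; omega, ?_⟩
  intro a ha b hb
  rw [slash_take (by omega)] at ha
  rw [slash_drop (by omega)] at hb
  obtain ⟨y, hy, rfl⟩ := mem_shiftW.1 ha
  have hy' : y ∈ u.take d := hy
  rcases List.mem_append.1 hb with hbl | hbr
  · obtain ⟨z, hz, rfl⟩ := mem_shiftW.1 hbl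
    have := h3 y hy' z hz
    omega
  · have h4 := le_wmax hbr
    have h5 : y ∈ u := List.mem_of_mem_take hy'
    have := hu.1 y h5
    omega

lemma wmax_le {u : List ℕ} {n : ℕ} (h : ∀ x ∈ u, x ≤ n) : wmax u ≤ n := by
  induction u with
  | nil => simp [wmax]
  | cons a t ih =>
    rw [wmax_cons]
    have := h a (List.mem_cons_self)
    have := ih fun x hx => h x (List.mem_cons_of_mem _ hx)
    omega

lemma split_spec {w : List ℕ} {c : ℕ} (hw : IsPacked w) (hc : GlobalDescent w c) :
    IsPacked ((w.take c).map (· - wmax (w.drop c))) ∧ IsPacked (w.drop c) ∧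
    ((w.take c).map (· - wmax (w.drop c))) ≠ [] ∧ (w.drop c) ≠ [] ∧
    w = slash ((w.take c).map (· - wmax (w.drop c))) (w.drop c) ∧
    ((w.take c).map (· - wmax (w.drop c))).length = c := by
  obtain ⟨hc1, hc2, hc3⟩ := hc
  set v := w.drop c with hv
  set M := wmax v with hM
  have hvne : v ≠ [] := by
    rw [hv, ← List.length_pos_iff, List.length_drop]; omega
  have htlen : (w.take c).length = c := by
    rw [List.length_take]; omega
  have htne : w.take c ≠ [] := by
    rw [← List.length_pos_iff]; omega
  have hvpos : ∀ x ∈ v, 0 < x := fun x hx => hw.1 x (List.mem_of_mem_drop hx)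
  have hMpos : 0 < M := wmax_pos hvne hvpos
  have hMmem : M ∈ v := wmax_mem (by omega)
  have hgt : ∀ a ∈ w.take c, M < a := fun a ha => hc3 a ha M hMmem
  have hsub : ∀ x ∈ w, x ∈ w.take c ∨ x ∈ v := by
    intro x hx
    rw [hv, ← List.mem_append, List.take_append_drop]; exact hx
  have hsub' : ∀ x, (x ∈ w.take c ∨ x ∈ v) → x ∈ w := by
    intro x hx
    rw [← List.take_append_drop c w, List.mem_append]; exact hx
  have hMw : M ≤ wmax w := le_wmax (hsub' M (Or.inr hMmem))
  have hwmem : wmax w ∈ w.take c := by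
    have hwpos : 0 < wmax w := by
      obtain ⟨a, ha⟩ := List.exists_mem_of_ne_nil _ htne
      have := hgt a ha; omega
    rcases hsub _ (wmax_mem (by omega)) with h | h
    · exact h
    · have := le_wmax h
      obtain ⟨a, ha⟩ := List.exists_mem_of_ne_nil _ htne
      have h1 := hgt a ha
      have h2 := le_wmax (hsub' a (Or.inl ha))
      omega
  have hwtake : wmax (w.take c) = wmax w := by
    apply le_antisymm
    · exact wmax_le (fun x hx => le_wmax (hsub' x (Or.inl hx)))
    · exact le_wmax hwmem
  have hle : ∀ x ∈ w.take c, M ≤ x := fun x hx => le_of_lt (hgt x hx)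
  have humax : wmax ((w.take c).map (· - M)) = wmax w - M := by
    rw [wmax_map_sub M hle, hwtake]
  have hvpacked : IsPacked v := by
    refine ⟨hvpos, fun i hi hile => ?_⟩
    rcases hsub i (hw.2 i hi (le_trans hile hMw)) with h | h
    · have := hgt i h; omega
    · exact h
  have hupacked : IsPacked ((w.take c).map (· - M)) := by
    constructor
    · intro x hx
      obtain ⟨y, hy, rfl⟩ := List.mem_map.1 hx
      have := hgt y hy; omega
    · intro i hi hile
      rw [humax] at hile
      have hiMw : i + M ∈ w := hw.2 (i + M) (by omega) (by omega)
      rcases hsub _ hiMw with h | h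
      · exact List.mem_map.2 ⟨i + M, h, by omega⟩
      · have := le_wmax h; omega
  have heq : w = slash ((w.take c).map (· - M)) v := by
    rw [slash, shiftW, List.map_map]
    have : ((· + M) ∘ (· - M)) = fun x : ℕ => x - M + M := rfl
    rw [this]
    have h2 : (w.take c).map (fun x => x - M + M) = w.take c := by
      rw [List.map_congr_left (fun x hx => by have := hle x hx; simp only [id]; omega : ∀ x ∈ w.take c, x - M + M = id x), List.map_id]
    rw [h2, hv, List.take_append_drop]
  exact ⟨hupacked, hvpacked, by simpa using htne, hvne, heq, by simpa using htlen⟩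

lemma slashAll_cons (u : List ℕ) (l : List (List ℕ)) :
    slashAll (u :: l) = slash u (slashAll l) := rfl

lemma slashAll_spec {l : List (List ℕ)} (hne : l ≠ []) (h : ∀ u ∈ l, Irred u) :
    IsPacked (slashAll l) ∧ slashAll l ≠ [] := by
  induction l with
  | nil => simp at hne
  | cons u t ih =>
    have hu := h u (List.mem_cons_self)
    by_cases ht : t = []
    · subst ht
      rw [slashAll_cons, slashAll, List.foldr_nil, slash_nil]
      exact ⟨hu.1, hu.2.1⟩
    · obtain ⟨h1, h2⟩ := ih ht (fun x hx => h x (List.mem_cons_of_mem _ hx))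
      rw [slashAll_cons]
      exact ⟨slash_packed hu.1 h1, slash_ne_nil h2⟩

lemma main_aux : ∀ n : ℕ, ∀ w : List ℕ, w.length ≤ n → IsPacked w → w ≠ [] →
    ∃! l : List (List ℕ), l ≠ [] ∧ (∀ u ∈ l, Irred u) ∧ w = slashAll l := by
  intro n
  induction n with
  | zero =>
    intro w hlen _ hne
    rw [Nat.le_zero, List.length_eq_zero_iff] at hlen
    exact absurd hlen hne
  | succ n ih =>
    intro w hlen hw hne
    classical
    by_cases hex : ∃ c, GlobalDescent w c
    · set c := Nat.find hex with hcdef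
      have hc : GlobalDescent w c := Nat.find_spec hex
      obtain ⟨hup, hvp, hune, hvne, heq, hulen⟩ := split_spec hw hc
      set v := w.drop c with hvdef
      set u := (w.take c).map (· - wmax v) with hudef
      have hc2 := hc.2.1
      have hvlen : v.length ≤ n := by
        rw [hvdef, List.length_drop]
        have := hc.1
        omega
      obtain ⟨l', ⟨hl'ne, hl'irr, hl'eq⟩, hl'uniq⟩ := ih v hvlen hvp hvne
      have huirr : Irred u := by
        refine ⟨hup, hune, fun d hd => ?_⟩
        have hdlt : d < c := by have := hd.2.1; omega
        have : GlobalDescent w d := by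
          rw [heq]; exact slash_GD_of_GD hup hd
        exact Nat.find_min hex hdlt this
      refine ⟨u :: l', ⟨List.cons_ne_nil _ _, ?_, ?_⟩, ?_⟩
      · intro x hx
        rcases List.mem_cons.1 hx with rfl | hx
        · exact huirr
        · exact hl'irr x hx
      · rw [slashAll_cons, ← hl'eq, ← heq]
      · rintro l ⟨hlne, hlirr, hleq⟩
        obtain ⟨u1, rest, rfl⟩ := List.exists_cons_of_ne_nil hlne
        have hu1 : Irred u1 := hlirr u1 (List.mem_cons_self)
        by_cases hrest : rest = []
        · subst hrest
          rw [slashAll_cons, slashAll, List.foldr_nil, slash_nil] at hleq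
          exact absurd (hleq ▸ hc) (hu1.2.2 c)
        · obtain ⟨hv1p, hv1ne⟩ := slashAll_spec hrest (fun x hx => hlirr x (List.mem_cons_of_mem _ hx))
          set v1 := slashAll rest with hv1def
          rw [slashAll_cons, ← hv1def] at hleq
          have hGDu1 : GlobalDescent w u1.length := by
            rw [hleq]; exact slash_GD hu1.1 hu1.2.1 hv1ne
          have h1 : c ≤ u1.length := Nat.find_min' hex hGDu1
          have h2 : ¬ c < u1.length := by
            intro hlt
            have : GlobalDescent (slash u1 v1) c := hleq ▸ hc
            exact hu1.2.2 c (GD_of_slash hlt this)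
          have hceq : c = u1.length := by omega
          have hv1eq : v1 = v := by
            rw [hvdef, hleq, slash_drop (le_of_eq hceq), hceq, List.drop_length]
            simp [shiftW]
          have hu1eq : u1 = u := by
            rw [hudef, hleq, slash_take (le_of_eq hceq), hceq, List.take_length, hv1eq, shiftW,
              List.map_map]
            have : ((· - wmax v) ∘ (· + wmax v)) = fun x : ℕ => x + wmax v - wmax v := rfl
            rw [this]
            rw [List.map_congr_left (fun x _ => by simp only [id]; omega :
              ∀ x ∈ u1, x + wmax v - wmax v = id x), List.map_id]
          have hresteq : rest = l' := by
            apply hl'uniq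
            exact ⟨hrest, fun x hx => hlirr x (List.mem_cons_of_mem _ hx), hv1eq ▸ hv1def⟩
          rw [hu1eq, hresteq]
    · have hirr : Irred w := ⟨hw, hne, fun c hc => hex ⟨c, hc⟩⟩
      refine ⟨[w], ⟨by simp, by simpa using hirr, by rw [slashAll, List.foldr_cons, List.foldr_nil, slash_nil]⟩, ?_⟩
      rintro l ⟨hlne, hlirr, hleq⟩
      obtain ⟨u1, rest, rfl⟩ := List.exists_cons_of_ne_nil hlne
      by_cases hrest : rest = []
      · subst hrest
        rw [slashAll_cons, slashAll, List.foldr_nil, slash_nil] at hleq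
        rw [hleq]
      · obtain ⟨hv1p, hv1ne⟩ := slashAll_spec hrest (fun x hx => hlirr x (List.mem_cons_of_mem _ hx))
        have hu1 : Irred u1 := hlirr u1 (List.mem_cons_self)
        have : GlobalDescent w u1.length := by
          rw [hleq, slashAll_cons]
          exact slash_GD hu1.1 hu1.2.1 hv1ne
        exact absurd ⟨_, this⟩ hex


theorem unique_factorization_into_irreducibles
    (w : List ℕ) (hw : IsPacked w) (hne : w ≠ []) :
    ∃! l : List (List ℕ), l ≠ [] ∧ (∀ u ∈ l, Irred u) ∧ w = slashAll l := by
  exact main_aux w.length w le_rfl hw hne
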